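/- The combined advantage adv = (1/2 + adv1)(1/2 + adv2)/(1/2 - 2·adv1·adv2) - 1/2 is nonnegative whenever adv1, adv2 ≥ 0 and adv1, adv2 ≤ 1/2, and is at least max(adv1, adv2) under these hypotheses. -/
import Mathlib


theorem combined_advantage_nonneg (adv adv1 adv2 : ℝ)
    (h1 : 0 ≤ adv1) (h1' : adv1 ≤ 1/2) (h2 : 0 ≤ adv2) (h2' : adv2 ≤ 1/2)
    (hlt : adv1 * adv2 < 1/4)
    (hadv : adv = (1/2 + adv1)*(1/2 + adv2)/(1/2 - 2*adv1*adv2) - 1/2) :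
    0 ≤ adv ∧ max adv1 adv2 ≤ adv := by
  have hd : 0 < 1/2 - 2*adv1*adv2 := by nlinarith
  have h1a : adv1 ≤ adv := by
    rw [hadv, le_sub_iff_add_le, le_div_iff₀ hd]; nlinarith [mul_nonneg (mul_nonneg h1 h1) h2, mul_nonneg (mul_nonneg h2 h2) h1, mul_nonneg h1 h2]
  have h2a : adv2 ≤ adv := by
    rw [hadv, le_sub_iff_add_le, le_div_iff₀ hd]; nlinarith [mul_nonneg (mul_nonneg h1 h1) h2, mul_nonneg (mul_nonneg h2 h2) h1, mul_nonneg h1 h2]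
  exact ⟨le_trans h1 h1a, max_le h1a h2a⟩
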